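/- Let (X, r) be a finite bijective non-degenerate set-theoretic solution of the Yang–Baxter equation, written r(x,y) = (λ_x(y), ρ_y(x)), and define η_x(y) = ρ_{λ_y⁻¹(x)}(y). Then for all x, y ∈ X, the elements x and y lie in the same orbit under G(X,r) = ⟨λ_z, η_z | z ∈ X⟩ if and only if they lie in the same orbit under F(X,r) = ⟨λ_z, ρ_z | z ∈ X⟩. In particular, (X,r) is indecomposable (F(X,r) transitive) if and only if G(X,r) acts transitively on X. -/

import Mathlib

/-- The map r acting on the first two components of a triple. -/
def yb12 {X : Type*} (r : X × X → X × X) : X × X × X → X × X × X :=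
  fun p => ((r (p.1, p.2.1)).1, (r (p.1, p.2.1)).2, p.2.2)

/-- The map r acting on the last two components of a triple. -/
def yb23 {X : Type*} (r : X × X → X × X) : X × X × X → X × X × X :=
  fun p => (p.1, r p.2)

/-- If every generator in `S` moves every point within the orbit of `closure T`,
then every element of `closure S` does so as well. -/
lemma yb_orbit_mono {X : Type*} (S T : Set (Equiv.Perm X))
    (h : ∀ s ∈ S, ∀ y : X, ∃ t ∈ Subgroup.closure T, t y = s y) :
    ∀ g ∈ Subgroup.closure S, ∀ y : X, ∃ t ∈ Subgroup.closure T, t y = g y := by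
  intro g hg
  induction hg using Subgroup.closure_induction with
  | mem s hs => exact h s hs
  | one => exact fun y => ⟨1, one_mem _, rfl⟩
  | mul g₁ g₂ _ _ ih₁ ih₂ =>
    intro y
    obtain ⟨t₂, ht₂, e₂⟩ := ih₂ y
    obtain ⟨t₁, ht₁, e₁⟩ := ih₁ (g₂ y)
    exact ⟨t₁ * t₂, mul_mem ht₁ ht₂, by simp [Equiv.Perm.mul_apply, e₂, e₁]⟩
  | inv g _ ih =>
    intro y
    obtain ⟨t, ht, e⟩ := ih (g⁻¹ y)
    refine ⟨t⁻¹, inv_mem ht, ?_⟩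
    simp only [show g (g⁻¹ y) = y from g.apply_symm_apply y] at e
    conv_lhs => rw [← e]
    exact t.symm_apply_apply _

theorem yb_orbits_G_eq_F {X : Type*} [Fintype X]
    (lam rho eta : X → Equiv.Perm X) (r : X × X → X × X)
    (hr : ∀ x y : X, r (x, y) = (lam x y, rho y x))
    (hrbij : Function.Bijective r)
    (hYB : yb12 r ∘ yb23 r ∘ yb12 r = yb23 r ∘ yb12 r ∘ yb23 r)
    (heta : ∀ x y : X, eta x y = rho ((lam y)⁻¹ x) y) :
    (∀ x y : X,
      (∃ g ∈ Subgroup.closure {g : Equiv.Perm X | ∃ z, g = lam z ∨ g = eta z}, g x = y) ↔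
      (∃ g ∈ Subgroup.closure {g : Equiv.Perm X | ∃ z, g = lam z ∨ g = rho z}, g x = y)) ∧
    ((∀ x y : X,
        ∃ g ∈ Subgroup.closure {g : Equiv.Perm X | ∃ z, g = lam z ∨ g = rho z}, g x = y) ↔
      (∀ x y : X,
        ∃ g ∈ Subgroup.closure {g : Equiv.Perm X | ∃ z, g = lam z ∨ g = eta z}, g x = y)) := by
  set Sη : Set (Equiv.Perm X) := {g : Equiv.Perm X | ∃ z, g = lam z ∨ g = eta z} with hSη
  set Sρ : Set (Equiv.Perm X) := {g : Equiv.Perm X | ∃ z, g = lam z ∨ g = rho z} with hSρ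
  have h₁ : ∀ g ∈ Subgroup.closure Sη, ∀ y : X, ∃ t ∈ Subgroup.closure Sρ, t y = g y := by
    apply yb_orbit_mono
    rintro s ⟨z, rfl | rfl⟩ y
    · exact ⟨lam z, Subgroup.subset_closure ⟨z, Or.inl rfl⟩, rfl⟩
    · exact ⟨rho ((lam y)⁻¹ z), Subgroup.subset_closure ⟨(lam y)⁻¹ z, Or.inr rfl⟩,
        (heta z y).symm⟩
  have h₂ : ∀ g ∈ Subgroup.closure Sρ, ∀ y : X, ∃ t ∈ Subgroup.closure Sη, t y = g y := by
    apply yb_orbit_mono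
    rintro s ⟨z, rfl | rfl⟩ y
    · exact ⟨lam z, Subgroup.subset_closure ⟨z, Or.inl rfl⟩, rfl⟩
    · refine ⟨eta (lam y z), Subgroup.subset_closure ⟨lam y z, Or.inr rfl⟩, ?_⟩
      rw [heta]
      simp
  have main : ∀ x y : X, (∃ g ∈ Subgroup.closure Sη, g x = y) ↔
      (∃ g ∈ Subgroup.closure Sρ, g x = y) := by
    intro x y
    constructor
    · rintro ⟨g, hg, rfl⟩
      exact h₁ g hg x
    · rintro ⟨g, hg, rfl⟩
      exact h₂ g hg x
  refine ⟨main, ?_⟩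
  constructor
  · intro h x y; exact (main x y).mpr (h x y)
  · intro h x y; exact (main x y).mp (h x y)
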